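/- Let T be a correct tree with root r and let c be a child of r (i.e., parent(c) = r). Reversing the edge: setting parent(c) = none and parent(r) = c, yields a correct tree with root c on the same vertex set. -/

import Mathlib

variable {V : Type*}

/-- Iterating a parent function `p : V → Option V`: `piter p n v` is the `n`-th parent
of `v` (or `none` if the chain has ended). -/
def piter (p : V → Option V) (n : ℕ) (v : V) : Option V := (fun o => o.bind p)^[n] (some v)

/-- A vertex is valid if some finite iteration of the parent function from it reaches a
vertex with no parent (a root). -/
def pvalid (p : V → Option V) (v : V) : Prop := ∃ n u, piter p n v = some u ∧ p u = none

/-- Weak connectivity relation of the functional digraph with edges `v → p v`. -/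
def pconn (p : V → Option V) : V → V → Prop :=
  Relation.ReflTransGen (fun a b => p a = some b ∨ p b = some a)

theorem pconn_equiv (p : V → Option V) : Equivalence (pconn p) :=
  ⟨fun _ => .refl,
   fun h => (@Relation.ReflTransGen.stdSymm _ _ ⟨fun _ _ hab => Or.symm hab⟩).symm _ _ h,
   fun h₁ h₂ => h₁.trans h₂⟩

/-- The setoid whose classes are the weakly connected components of the functional
digraph of `p`. -/
def pSetoid (p : V → Option V) : Setoid V := ⟨pconn p, pconn_equiv p⟩

lemma piter_iterate_none (p : V → Option V) (n : ℕ) :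
    (fun o => Option.bind o p)^[n] none = none := by
  induction n with
  | zero => rfl
  | succ n ih => rw [Function.iterate_succ_apply, Option.bind_none, ih]

lemma piter_succ (p : V → Option V) (n : ℕ) (v : V) :
    piter p (n+1) v = (p v).bind (fun w => piter p n w) := by
  unfold piter
  rw [Function.iterate_succ_apply]
  cases hpv : p v with
  | none => simp [hpv, piter_iterate_none]
  | some w => simp [hpv, piter]

lemma piter_succ_of_some (p : V → Option V) (n : ℕ) {v w : V} (h : p v = some w) :
    piter p (n+1) v = piter p n w := by
  rw [piter_succ, h]; rfl

lemma piter_zero (p : V → Option V) (v : V) : piter p 0 v = some v := rfl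

/-- Flipping the edge between the root `r` of a correct tree and a child `c` of `r`
(setting the parent of `c` to none and the parent of `r` to `c`) yields a correct tree
with root `c` on the same vertex set. -/
theorem flip_root_child [Fintype V] [DecidableEq V] (p : V → Option V)
    (hconn : ∀ a b, pconn p a b)
    (r : V) (hr : p r = none)
    (c : V) (hc : p c = some r) :
    ∀ p' : V → Option V, p' = (fun v => if v = c then none else if v = r then some c else p v) →
      (∀ a b, pconn p' a b) ∧ p' c = none ∧
      (∀ v, p' v = none → v = c) ∧ (∀ v, pvalid p' v) := by
  intro p' hp'
  have hrc : r ≠ c := by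
    intro h; rw [← h, hr] at hc; cases hc
  have hp'c : p' c = none := by rw [hp']; simp
  have hp'r : p' r = some c := by rw [hp']; simp [hrc, Ne.symm hrc]
  -- every vertex reaches r under p
  have key : ∀ v, ∃ n, piter p n v = some r := by
    intro v
    induction hconn r v with
    | refl => exact ⟨0, rfl⟩
    | tail _ hstep ih =>
      rename_i b w _
      obtain ⟨n, hn⟩ := ih
      rcases hstep with hbw | hwb
      · -- p b = some w
        cases n with
        | zero =>
          have : b = r := Option.some.inj hn
          rw [this, hr] at hbw; cases hbw
        | succ m =>
          rw [piter_succ_of_some p m hbw] at hn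
          exact ⟨m, hn⟩
      · exact ⟨n + 1, by rw [piter_succ_of_some p n hwb]; exact hn⟩
  -- every vertex reaches c under p'
  have key' : ∀ n v, piter p n v = some r → ∃ m, piter p' m v = some c := by
    intro n
    induction n with
    | zero =>
      intro v hv
      have hvr : v = r := Option.some.inj hv
      subst hvr
      exact ⟨1, by rw [piter_succ_of_some p' 0 hp'r]; rfl⟩
    | succ n ih =>
      intro v hv
      by_cases hvc : v = c
      · exact ⟨0, by rw [hvc]; rfl⟩
      · cases hpv : p v with
        | none =>
          rw [piter_succ, hpv] at hv; cases hv
        | some w =>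
          rw [piter_succ_of_some p n hpv] at hv
          obtain ⟨m, hm⟩ := ih w hv
          have hvr : v ≠ r := by intro h; rw [h, hr] at hpv; cases hpv
          have hp'v : p' v = some w := by rw [hp']; simp [hvc, hvr, hpv]
          exact ⟨m + 1, by rw [piter_succ_of_some p' m hp'v]; exact hm⟩
  have reach' : ∀ v, ∃ m, piter p' m v = some c := by
    intro v
    obtain ⟨n, hn⟩ := key v
    exact key' n v hn
  refine ⟨?_, hp'c, ?_, ?_⟩
  · -- connectivity
    have hedge : ∀ x y : V, p x = some y → (p' x = some y ∨ p' y = some x) := by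
      intro x y hxy
      by_cases hxc : x = c
      · subst hxc
        have : y = r := by rw [hc] at hxy; exact Option.some.inj hxy.symm
        subst this
        exact Or.inr hp'r
      · have hxr : x ≠ r := by intro h; rw [h, hr] at hxy; cases hxy
        left; rw [hp']; simp [hxc, hxr, hxy]
    intro a b
    refine Relation.ReflTransGen.mono ?_ _ _ (hconn a b)
    intro x y h
    rcases h with h | h
    · exact hedge x y h
    · exact (hedge y x h).symm
  · -- unique root
    intro v hv
    obtain ⟨m, hm⟩ := reach' v
    cases m with
    | zero => exact Option.some.inj hm
    | succ m =>
      rw [piter_succ, hv] at hm; cases hm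
  · -- validity
    intro v
    obtain ⟨m, hm⟩ := reach' v
    exact ⟨m, c, hm, hp'c⟩
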